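/- arXiv:2005.00301 — 3 statements merged into one kernel-verified Lean document; each statement's English description precedes it below -/
import Mathlib

section
/- Let n ≥ 2 and let a ≤ b ≤ c be natural numbers with n^{-a} + n^{-b} + n^{-c} ≤ 1 (the Kraft inequality, ensuring codes exist). Then the number of prefix codes with length distribution (a,b,c) over an n-letter alphabet divided by the number of uniquely decodable codes with length distribution (a,b,c) is strictly greater than α_n, where α_2 = 1/6 and α_n = (n−2)/n for n > 2. -/
/-- A sequence of code-words `C : Fin m → List X` is a uniquely decodable code if
every word over `X` has at most one factorization into the code-words
(factorizations being compared as sequences of indices). -/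
def IsUDCode {X : Type*} {m : ℕ} (C : Fin m → List X) : Prop :=
  ∀ l₁ l₂ : List (Fin m), (l₁.map C).flatten = (l₂.map C).flatten → l₁ = l₂

/-- A sequence of code-words is a prefix code if `C i` is a prefix of `C j`
only when `i = j`. -/
def IsPrefixCode {X : Type*} {m : ℕ} (C : Fin m → List X) : Prop :=
  ∀ i j : Fin m, C i <+: C j → i = j

namespace PrefRatioAux
open List

/-! ### Prefix codes are uniquely decodable -/

lemma ne_nil_of_prefixCode {X : Type*} {m : ℕ} {C : Fin m → List X} (hm : 2 ≤ m)
    (h : IsPrefixCode C) (i : Fin m) : C i ≠ [] := by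
  intro hnil
  have : Nontrivial (Fin m) := Fin.nontrivial_iff_two_le.mpr hm
  obtain ⟨j, hj⟩ := exists_ne i
  exact hj (h i j (by simp [hnil]) ▸ rfl)

lemma isUD_of_isPrefixCode {X : Type*} {m : ℕ} {C : Fin m → List X} (hm : 2 ≤ m)
    (h : IsPrefixCode C) : IsUDCode C := by
  have hne : ∀ i, C i ≠ [] := ne_nil_of_prefixCode hm h
  intro l₁
  induction l₁ with
  | nil =>
    intro l₂ hl
    cases l₂ with
    | nil => rfl
    | cons j t =>
      simp only [map_nil, flatten, map_cons, flatten_cons] at hl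
      exact absurd (append_eq_nil_iff.mp hl.symm).1 (hne j)
  | cons i t ih =>
    intro l₂ hl
    cases l₂ with
    | nil =>
      simp only [map_nil, flatten, map_cons, flatten_cons] at hl
      exact absurd (append_eq_nil_iff.mp hl).1 (hne i)
    | cons j s =>
      simp only [map_cons, flatten_cons] at hl
      have hij : i = j := by
        have h1 : C i <+: C j ++ (s.map C).flatten := hl ▸ prefix_append _ _
        have h2 : C j <+: C j ++ (s.map C).flatten := prefix_append _ _
        rcases prefix_or_prefix_of_prefix h1 h2 with h' | h'
        · exact h i j h'
        · exact (h j i h').symm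
      subst hij
      have := append_cancel_left hl
      rw [ih s this]

/-! ### Characterizations -/

lemma prefixCode_triple_iff {X : Type*} {a b c : ℕ} {w v u : List X}
    (hw : w.length = a) (hv : v.length = b) (hu : u.length = c)
    (hab : a ≤ b) (hbc : b ≤ c) :
    IsPrefixCode ![w, v, u] ↔ ¬ (w <+: v) ∧ ¬ (w <+: u) ∧ ¬ (v <+: u) := by
  constructor
  · intro h
    refine ⟨fun hp => ?_, fun hp => ?_, fun hp => ?_⟩
    · exact absurd (h 0 1 (by simpa using hp)) (by decide)
    · exact absurd (h 0 2 (by simpa using hp)) (by decide)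
    · exact absurd (h 1 2 (by simpa using hp)) (by decide)
  · rintro ⟨h1, h2, h3⟩ i j hp
    fin_cases i <;> fin_cases j <;> simp_all
    · exact h1 (hp.eq_of_length (by have := hp.length_le; omega) ▸ prefix_rfl)
    · exact h2 (hp.eq_of_length (by have := hp.length_le; omega) ▸ prefix_rfl)
    · exact h3 (hp.eq_of_length (by have := hp.length_le; omega) ▸ prefix_rfl)

lemma not_comm_of_isUD {X : Type*} {w v u : List X}
    (h : IsUDCode ![w, v, u]) : w ++ v ≠ v ++ w := by
  intro hc
  have := h [0, 1] [1, 0] (by simp [hc])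
  simp at this

/-! ### Words of fixed length -/

abbrev Wd (n L : ℕ) := {l : List (Fin n) // l.length = L}

instance (n L : ℕ) : Fintype (Wd n L) := inferInstanceAs (Fintype (List.Vector (Fin n) L))

lemma natCard_Wd (n L : ℕ) : Nat.card (Wd n L) = n ^ L := by
  have : Nat.card (List.Vector (Fin n) L) = n ^ L := by
    rw [Nat.card_eq_fintype_card, card_vector, Fintype.card_fin]
  exact this

lemma append_drop_cancel {X : Type*} {w v : List X} (h : w <+: v) :
    w ++ v.drop w.length = v := by
  obtain ⟨r, rfl⟩ := h; rw [List.drop_left]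

variable (n a b c : ℕ)

/-! ### The five slice equivalences -/

def eA (hab : a ≤ b) : {t : Wd n a × Wd n b × Wd n c // t.1.1 <+: t.2.1.1} ≃
    (Wd n a × Wd n (b - a) × Wd n c) where
  toFun x := ⟨x.1.1, ⟨x.1.2.1.1.drop a, by simp [x.1.2.1.2]⟩, x.1.2.2⟩
  invFun y := ⟨⟨y.1, ⟨y.1.1 ++ y.2.1.1, by simp [y.1.2, y.2.1.2]; omega⟩, y.2.2⟩,
    y.1.1.prefix_append y.2.1.1⟩
  left_inv := by
    rintro ⟨⟨⟨w, hw⟩, ⟨v, hv⟩, ⟨u, hu⟩⟩, hx⟩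
    simp only [Subtype.mk.injEq, Prod.mk.injEq]
    refine ⟨trivial, ?_, trivial⟩
    subst hw
    exact append_drop_cancel hx
  right_inv := by
    rintro ⟨⟨w, hw⟩, ⟨s, hs⟩, ⟨u, hu⟩⟩
    simp only [Subtype.mk.injEq, Prod.mk.injEq]
    refine ⟨trivial, ?_, trivial⟩
    subst hw
    exact List.drop_left

def eB (hac : a ≤ c) : {t : Wd n a × Wd n b × Wd n c // t.1.1 <+: t.2.2.1} ≃
    (Wd n a × Wd n b × Wd n (c - a)) where
  toFun x := ⟨x.1.1, x.1.2.1, ⟨x.1.2.2.1.drop a, by simp [x.1.2.2.2]⟩⟩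
  invFun y := ⟨⟨y.1, y.2.1, ⟨y.1.1 ++ y.2.2.1, by simp [y.1.2, y.2.2.2]; omega⟩⟩,
    y.1.1.prefix_append y.2.2.1⟩
  left_inv := by
    rintro ⟨⟨⟨w, hw⟩, ⟨v, hv⟩, ⟨u, hu⟩⟩, hx⟩
    simp only [Subtype.mk.injEq, Prod.mk.injEq]
    refine ⟨trivial, trivial, ?_⟩
    subst hw
    exact append_drop_cancel hx
  right_inv := by
    rintro ⟨⟨w, hw⟩, ⟨v, hv⟩, ⟨s, hs⟩⟩
    simp only [Subtype.mk.injEq, Prod.mk.injEq]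
    refine ⟨trivial, trivial, ?_⟩
    subst hw
    exact List.drop_left

def eC (hbc : b ≤ c) : {t : Wd n a × Wd n b × Wd n c // t.2.1.1 <+: t.2.2.1} ≃
    (Wd n a × Wd n b × Wd n (c - b)) where
  toFun x := ⟨x.1.1, x.1.2.1, ⟨x.1.2.2.1.drop b, by simp [x.1.2.2.2]⟩⟩
  invFun y := ⟨⟨y.1, y.2.1, ⟨y.2.1.1 ++ y.2.2.1, by simp [y.2.1.2, y.2.2.2]; omega⟩⟩,
    y.2.1.1.prefix_append y.2.2.1⟩
  left_inv := by
    rintro ⟨⟨⟨w, hw⟩, ⟨v, hv⟩, ⟨u, hu⟩⟩, hx⟩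
    simp only [Subtype.mk.injEq, Prod.mk.injEq]
    refine ⟨trivial, trivial, ?_⟩
    subst hv
    exact append_drop_cancel hx
  right_inv := by
    rintro ⟨⟨w, hw⟩, ⟨v, hv⟩, ⟨s, hs⟩⟩
    simp only [Subtype.mk.injEq, Prod.mk.injEq]
    refine ⟨trivial, trivial, ?_⟩
    subst hv
    exact List.drop_left

def eAB (hab : a ≤ b) (hac : a ≤ c) :
    {t : Wd n a × Wd n b × Wd n c // t.1.1 <+: t.2.1.1 ∧ t.1.1 <+: t.2.2.1} ≃
    (Wd n a × Wd n (b - a) × Wd n (c - a)) where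
  toFun x := ⟨x.1.1, ⟨x.1.2.1.1.drop a, by simp [x.1.2.1.2]⟩,
    ⟨x.1.2.2.1.drop a, by simp [x.1.2.2.2]⟩⟩
  invFun y := ⟨⟨y.1, ⟨y.1.1 ++ y.2.1.1, by simp [y.1.2, y.2.1.2]; omega⟩,
    ⟨y.1.1 ++ y.2.2.1, by simp [y.1.2, y.2.2.2]; omega⟩⟩,
    ⟨y.1.1.prefix_append y.2.1.1, y.1.1.prefix_append y.2.2.1⟩⟩
  left_inv := by
    rintro ⟨⟨⟨w, hw⟩, ⟨v, hv⟩, ⟨u, hu⟩⟩, hx⟩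
    simp only [Subtype.mk.injEq, Prod.mk.injEq]
    refine ⟨trivial, ?_, ?_⟩ <;> subst hw
    · exact append_drop_cancel hx.1
    · exact append_drop_cancel hx.2
  right_inv := by
    rintro ⟨⟨w, hw⟩, ⟨s, hs⟩, ⟨r, hr⟩⟩
    simp only [Subtype.mk.injEq, Prod.mk.injEq]
    refine ⟨trivial, ?_, ?_⟩ <;> subst hw
    · exact List.drop_left
    · exact List.drop_left

def eAC (hab : a ≤ b) (hbc : b ≤ c) :
    {t : Wd n a × Wd n b × Wd n c // t.1.1 <+: t.2.1.1 ∧ t.2.1.1 <+: t.2.2.1} ≃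
    (Wd n a × Wd n (b - a) × Wd n (c - b)) where
  toFun x := ⟨x.1.1, ⟨x.1.2.1.1.drop a, by simp [x.1.2.1.2]⟩,
    ⟨x.1.2.2.1.drop b, by simp [x.1.2.2.2]⟩⟩
  invFun y := ⟨⟨y.1, ⟨y.1.1 ++ y.2.1.1, by simp [y.1.2, y.2.1.2]; omega⟩,
    ⟨(y.1.1 ++ y.2.1.1) ++ y.2.2.1, by simp [y.1.2, y.2.1.2, y.2.2.2]; omega⟩⟩,
    ⟨y.1.1.prefix_append y.2.1.1, (y.1.1 ++ y.2.1.1).prefix_append y.2.2.1⟩⟩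
  left_inv := by
    rintro ⟨⟨⟨w, hw⟩, ⟨v, hv⟩, ⟨u, hu⟩⟩, hx⟩
    simp only [Subtype.mk.injEq, Prod.mk.injEq]
    have e1 : w ++ v.drop a = v := by subst hw; exact append_drop_cancel hx.1
    refine ⟨trivial, e1, ?_⟩
    rw [e1]; subst hv
    exact append_drop_cancel hx.2
  right_inv := by
    rintro ⟨⟨w, hw⟩, ⟨s, hs⟩, ⟨r, hr⟩⟩
    simp only [Subtype.mk.injEq, Prod.mk.injEq]
    have e1 : (w ++ s).drop a = s := by subst hw; exact List.drop_left
    have e2 : (w ++ s).length = b := by simp [hw, hs]; omega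
    refine ⟨trivial, e1, ?_⟩
    rw [← e2]
    exact List.drop_left

/-! ### Word powers and the commuting injection -/

def wpow {X : Type*} (t : List X) (k : ℕ) : List X := (List.replicate k t).flatten

lemma wpow_add {X : Type*} (t : List X) (p q : ℕ) : wpow t (p + q) = wpow t p ++ wpow t q := by
  rw [wpow, wpow, wpow, List.replicate_add, List.flatten_append]

lemma wpow_one {X : Type*} (t : List X) : wpow t 1 = t := by simp [wpow]

lemma wpow_length {X : Type*} (t : List X) (k : ℕ) : (wpow t k).length = k * t.length := by
  induction k with
  | zero => simp [wpow]
  | succ k ih => rw [wpow_add, List.length_append, ih, wpow_one, Nat.succ_mul]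

lemma wpow_comm {X : Type*} (t : List X) (p q : ℕ) :
    wpow t p ++ wpow t q = wpow t q ++ wpow t p := by
  rw [← wpow_add, ← wpow_add, Nat.add_comm]

lemma take_wpow {X : Type*} (t : List X) (k : ℕ) (hk : 1 ≤ k) :
    (wpow t k).take t.length = t := by
  obtain ⟨k, rfl⟩ := Nat.exists_eq_add_of_le hk
  rw [wpow_add t 1 k, wpow_one, List.take_left]

def commInj : Wd n (Nat.gcd a b) × Wd n c →
    {t : Wd n a × Wd n b × Wd n c // t.1.1 ++ t.2.1.1 = t.2.1.1 ++ t.1.1} := fun p =>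
  ⟨⟨⟨wpow p.1.1 (a / Nat.gcd a b), by
      rw [wpow_length, p.1.2, Nat.div_mul_cancel (Nat.gcd_dvd_left a b)]⟩,
    ⟨wpow p.1.1 (b / Nat.gcd a b), by
      rw [wpow_length, p.1.2, Nat.div_mul_cancel (Nat.gcd_dvd_right a b)]⟩,
    p.2⟩, wpow_comm _ _ _⟩

lemma commInj_injective (ha : 1 ≤ a) :
    Function.Injective (commInj n a b c) := by
  have hg : 0 < Nat.gcd a b := Nat.gcd_pos_of_pos_left b ha
  have hk : 1 ≤ a / Nat.gcd a b :=
    Nat.div_pos (Nat.le_of_dvd ha (Nat.gcd_dvd_left a b)) hg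
  rintro ⟨⟨t, ht⟩, u⟩ ⟨⟨s, hs⟩, r⟩ h
  have e1 : wpow t (a / Nat.gcd a b) = wpow s (a / Nat.gcd a b) :=
    congrArg (fun x => x.1.1.1) h
  have e3 : u = r := congrArg (fun x => x.1.2.2) h
  have hts : t = s := by
    have h1 := take_wpow t (a / Nat.gcd a b) hk
    have h2 := take_wpow s (a / Nat.gcd a b) hk
    rw [ht] at h1
    rw [hs] at h2
    rw [← h1, ← h2, e1]
  subst hts
  subst e3
  simp

/-! ### The special non-uniquely-decodable triple -/

def spw (hn : 2 ≤ n) (hb : 1 ≤ b) : Wd n a × Wd n b × Wd n c :=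
  ⟨⟨List.replicate a ⟨0, by omega⟩, List.length_replicate⟩,
   ⟨List.replicate (b-1) (⟨0, by omega⟩ : Fin n) ++ [⟨1, by omega⟩], by
      simp only [List.length_append, List.length_replicate, List.length_cons,
        List.length_nil]
      omega⟩,
   ⟨List.replicate c ⟨0, by omega⟩, List.length_replicate⟩⟩

lemma spw_not_comm (hn : 2 ≤ n) (ha : 1 ≤ a) (hb : 1 ≤ b) :
    ¬ ((spw n a b c hn hb).1.1 ++ (spw n a b c hn hb).2.1.1 =
       (spw n a b c hn hb).2.1.1 ++ (spw n a b c hn hb).1.1) := by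
  intro hc
  simp only [spw] at hc
  set z0 : Fin n := ⟨0, by omega⟩
  set z1 : Fin n := ⟨1, by omega⟩
  have e1 : (List.replicate a z0 ++ (List.replicate (b-1) z0 ++ [z1])).getLast? = some z1 := by
    rw [← List.append_assoc]; exact List.getLast?_concat
  have e2 : ((List.replicate (b-1) z0 ++ [z1]) ++ List.replicate a z0).getLast? = some z0 := by
    obtain ⟨a', rfl⟩ : ∃ a', a = a' + 1 := ⟨a - 1, by omega⟩
    rw [List.replicate_succ', ← List.append_assoc]
    exact List.getLast?_concat
  rw [hc, e2] at e1
  simp [z0, z1, Fin.mk.injEq] at e1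

lemma spw_not_ud (hn : 2 ≤ n) (hb : 1 ≤ b) :
    ¬ IsUDCode ![(spw n a b c hn hb).1.1, (spw n a b c hn hb).2.1.1,
      (spw n a b c hn hb).2.2.1] := by
  intro h
  have := h [2, 0] [0, 2] (by
    simp only [spw, List.map_cons, List.map_nil, Matrix.cons_val_zero, Matrix.cons_val_two,
      Matrix.cons_val_one, Matrix.head_cons, Matrix.tail_cons, List.flatten]
    simp [← List.replicate_add, Nat.add_comm])
  simp at this

/-! ### Equivalence with the triple-of-lists form -/

def tripleEquiv (Q : List (Fin n) → List (Fin n) → List (Fin n) → Prop) :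
    {T : List (Fin n) × List (Fin n) × List (Fin n) //
      T.1.length = a ∧ T.2.1.length = b ∧ T.2.2.length = c ∧ Q T.1 T.2.1 T.2.2} ≃
    {t : Wd n a × Wd n b × Wd n c // Q t.1.1 t.2.1.1 t.2.2.1} where
  toFun x := ⟨⟨⟨x.1.1, x.2.1⟩, ⟨x.1.2.1, x.2.2.1⟩, ⟨x.1.2.2, x.2.2.2.1⟩⟩, x.2.2.2.2⟩
  invFun y := ⟨⟨y.1.1.1, y.1.2.1.1, y.1.2.2.1⟩, y.1.1.2, y.1.2.1.2, y.1.2.2.2, y.2⟩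
  left_inv := by rintro ⟨⟨w, v, u⟩, h⟩; rfl
  right_inv := by rintro ⟨⟨⟨w, hw⟩, ⟨v, hv⟩, ⟨u, hu⟩⟩, h⟩; rfl

/-! ### Analytic key lemmas -/

lemma key_norm (hn : 2 ≤ n) (x y z : ℝ)
    (hx : x ≤ 1/n) (hyx : y ≤ x) (hz : 0 < z) (hzy : z ≤ y)
    (hk : x + y + z ≤ 1)
    (hcase : y = x ∨ y ≤ x / n)
    (hx2 : n = 2 → y = x → x ≤ 1/4) :
    (if n = 2 then (1:ℝ)/6 else ((n:ℝ)-2)/n) * (1 - n*x*y) ≤ (1-x)*(1-x-y) := by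
  have hy0 : 0 < y := lt_of_lt_of_le hz hzy
  have hx0 : 0 < x := lt_of_lt_of_le hy0 hyx
  have hn0 : (0:ℝ) < n := by positivity
  have hnx : x * n ≤ 1 := (le_div_iff₀ hn0).mp (by simpa [one_div] using hx)
  by_cases h2 : n = 2
  · subst h2
    simp only [if_pos]
    push_cast at *
    rcases hcase with h | h
    · subst h
      have hx4 : y ≤ 1/4 := hx2 trivial rfl
      nlinarith [sq_nonneg y]
    · nlinarith [mul_nonneg (by linarith : (0:ℝ) ≤ 1 - y) (by linarith : (0:ℝ) ≤ 1 - 2*y),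
        mul_nonneg (by linarith : (0:ℝ) ≤ x/2 - y) (by linarith : (0:ℝ) ≤ 6 - 8*x),
        mul_nonneg (by linarith : (0:ℝ) ≤ 1 - x) (by linarith : (0:ℝ) ≤ 1 - 2*x)]
  · simp only [if_neg h2]
    have hn3 : (3:ℝ) ≤ n := by
      have : 3 ≤ n := by omega
      exact_mod_cast this
    rw [div_mul_eq_mul_div, div_le_iff₀ hn0]
    rcases hcase with h | h
    · subst h
      nlinarith [mul_nonneg (by nlinarith : (0:ℝ) ≤ 1 - y*n) (by nlinarith : (0:ℝ) ≤ 2 - y*n)]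
    · have hny : y * n ≤ x := (le_div_iff₀ hn0).mp h
      nlinarith [mul_nonneg (by nlinarith : (0:ℝ) ≤ 1 - x*n) (by linarith : (0:ℝ) ≤ 2 - x),
        mul_nonneg (mul_nonneg (by nlinarith : (0:ℝ) ≤ (n:ℝ)*n - n) hx0.le) hy0.le,
        hny]

lemma key_pow (hn : 2 ≤ n) (ha : 1 ≤ a) (hab : a ≤ b) (hbc : b ≤ c)
    (hkraft : (1:ℝ)/n^a + 1/n^b + 1/n^c ≤ 1) :
    (if n = 2 then (1:ℝ)/6 else ((n:ℝ)-2)/n) * ((n:ℝ)^a * n^b * n^c - n^(c+1)) ≤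
      (n:ℝ)^a*n^b*n^c + n^a*n^(b-a)*n^(c-a) + n^a*n^(b-a)*n^(c-b)
      - n^a*n^(b-a)*n^c - n^a*n^b*n^(c-a) - n^a*n^b*n^(c-b) := by
  have hn0 : (0:ℝ) < n := by positivity
  have hn2 : (2:ℝ) ≤ n := by exact_mod_cast hn
  have hn1 : (1:ℝ) ≤ n := by linarith
  have hP : (0:ℝ) < (n:ℝ)^a := by positivity
  have hQ : (0:ℝ) < (n:ℝ)^b := by positivity
  have hR : (0:ℝ) < (n:ℝ)^c := by positivity
  set x : ℝ := ((n:ℝ)^a)⁻¹ with hxdef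
  set y : ℝ := ((n:ℝ)^b)⁻¹ with hydef
  set z : ℝ := ((n:ℝ)^c)⁻¹ with hzdef
  have hxx : x ≤ 1/(n:ℝ) := by
    rw [hxdef, one_div]
    exact inv_anti₀ hn0 (by calc (n:ℝ) = n^1 := (pow_one _).symm
      _ ≤ n^a := by exact pow_le_pow_right₀ hn1 ha)
  have hyx : y ≤ x := inv_anti₀ hP (pow_le_pow_right₀ hn1 hab)
  have hz : 0 < z := by positivity
  have hzy : z ≤ y := inv_anti₀ hQ (pow_le_pow_right₀ hn1 hbc)
  have hk : x + y + z ≤ 1 := by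
    rw [hxdef, hydef, hzdef]
    simpa [one_div] using hkraft
  have hcase : y = x ∨ y ≤ x / n := by
    rcases Nat.eq_or_lt_of_le hab with h | h
    · left; rw [hxdef, hydef, h]
    · right
      have h1 : (n:ℝ)^(a+1) ≤ (n:ℝ)^b := pow_le_pow_right₀ hn1 h
      have h2 : y ≤ ((n:ℝ)^(a+1))⁻¹ := inv_anti₀ (by positivity) h1
      calc y ≤ ((n:ℝ)^(a+1))⁻¹ := h2
        _ = x / n := by rw [pow_succ, mul_inv, hxdef, div_eq_mul_inv]
  have hx2 : n = 2 → y = x → x ≤ 1/4 := by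
    intro h2 hyx2
    have hba : b = a := by
      by_contra hne
      have h : a < b := lt_of_le_of_ne hab (fun h => hne h.symm)
      have : (n:ℝ)^a < (n:ℝ)^b := pow_lt_pow_right₀ (by exact_mod_cast hn) h
      have : y < x := by rw [hxdef, hydef]; exact inv_strictAnti₀ hP this
      linarith [this, hyx2.ge]
    have ha2 : 2 ≤ a := by
      by_contra hlt
      have ha1 : a = 1 := by omega
      subst h2 ha1
      rw [hba] at hkraft
      push_cast at hkraft
      norm_num at hkraft
      linarith [pow_pos (by norm_num : (0:ℝ) < 2) c, hkraft]
    have : (4:ℝ) ≤ (n:ℝ)^a := by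
      calc (4:ℝ) = 2^2 := by norm_num
        _ ≤ (n:ℝ)^2 := pow_le_pow_left₀ (by norm_num) hn2 2
        _ ≤ (n:ℝ)^a := pow_le_pow_right₀ hn1 ha2
    rw [hxdef]
    rw [show (1:ℝ)/4 = 4⁻¹ by norm_num]
    exact inv_anti₀ (by norm_num) this
  have key := key_norm n hn x y z hxx hyx hz hzy hk hcase hx2
  set r : ℝ := if n = 2 then (1:ℝ)/6 else ((n:ℝ)-2)/n with hrdef
  have hmul := mul_le_mul_of_nonneg_left key
    (le_of_lt (by positivity : (0:ℝ) < (n:ℝ)^a * (n:ℝ)^b * (n:ℝ)^c))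
  have eba : (n:ℝ)^(b-a) = n^b * x := by
    rw [hxdef, ← div_eq_mul_inv, eq_div_iff (ne_of_gt hP), ← pow_add]
    congr 1; omega
  have eca : (n:ℝ)^(c-a) = n^c * x := by
    rw [hxdef, ← div_eq_mul_inv, eq_div_iff (ne_of_gt hP), ← pow_add]
    congr 1; omega
  have ecb : (n:ℝ)^(c-b) = n^c * y := by
    rw [hydef, ← div_eq_mul_inv, eq_div_iff (ne_of_gt hQ), ← pow_add]
    congr 1; omega
  have E1 : (n:ℝ)^a * (n:ℝ)^b * (n:ℝ)^c * ((1-x)*(1-x-y)) =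
      (n:ℝ)^a*n^b*n^c + n^a*(n^b*x)*(n^c*x) + n^a*(n^b*x)*(n^c*y)
      - n^a*(n^b*x)*n^c - n^a*n^b*(n^c*x) - n^a*n^b*(n^c*y) := by ring
  have E2 : (n:ℝ)^a * (n:ℝ)^b * (n:ℝ)^c * (r * (1 - (n:ℝ)*x*y)) =
      r * ((n:ℝ)^a * n^b * n^c - n^(c+1)) := by
    rw [pow_succ, hxdef, hydef]
    field_simp
  rw [eba, eca, ecb, ← E1, ← E2]
  calc (n:ℝ)^a * (n:ℝ)^b * (n:ℝ)^c * (r * (1 - (n:ℝ)*x*y))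
      ≤ (n:ℝ)^a * (n:ℝ)^b * (n:ℝ)^c * ((1-x)*(1-x-y)) := hmul
    _ = _ := rfl


/-! ### Main theorem -/

set_option maxHeartbeats 1600000 in
theorem main (n a b c : ℕ) (hn : 2 ≤ n) (hab : a ≤ b) (hbc : b ≤ c)
    (hkraft : (1 : ℝ) / n ^ a + 1 / n ^ b + 1 / n ^ c ≤ 1) :
    (Nat.card {T : List (Fin n) × List (Fin n) × List (Fin n) //
        T.1.length = a ∧ T.2.1.length = b ∧ T.2.2.length = c ∧
        IsPrefixCode ![T.1, T.2.1, T.2.2]} : ℝ) /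
      (Nat.card {T : List (Fin n) × List (Fin n) × List (Fin n) //
        T.1.length = a ∧ T.2.1.length = b ∧ T.2.2.length = c ∧
        IsUDCode ![T.1, T.2.1, T.2.2]} : ℝ) >
      (if n = 2 then 1 / 6 else ((n : ℝ) - 2) / n) := by
  set rr : ℝ := if n = 2 then (1:ℝ)/6 else ((n:ℝ)-2)/n with hrr
  classical
  have hnR : (0:ℝ) < n := by positivity
  have hn2R : (2:ℝ) ≤ n := by exact_mod_cast hn
  have hn1R : (1:ℝ) ≤ n := by linarith
  have ha : 1 ≤ a := by
    by_contra h
    have ha0 : a = 0 := by omega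
    subst ha0
    norm_num at hkraft
    have h1 : (0:ℝ) < ((n:ℝ)^b)⁻¹ := by positivity
    have h2 : (0:ℝ) < ((n:ℝ)^c)⁻¹ := by positivity
    linarith
  have hb : 1 ≤ b := le_trans ha hab
  have hac : a ≤ c := le_trans hab hbc
  set V := Wd n a × Wd n b × Wd n c with hV
  haveI : Fintype V := inferInstanceAs (Fintype (Wd n a × Wd n b × Wd n c))
  haveI : Finite V := Finite.of_fintype V
  set Spre : Set V := {t | IsPrefixCode ![t.1.1, t.2.1.1, t.2.2.1]} with hSpre
  set Sud : Set V := {t | IsUDCode ![t.1.1, t.2.1.1, t.2.2.1]} with hSud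
  set SA : Set V := {t | t.1.1 <+: t.2.1.1} with hSA
  set SB : Set V := {t | t.1.1 <+: t.2.2.1} with hSB
  set SC : Set V := {t | t.2.1.1 <+: t.2.2.1} with hSC
  set Scm : Set V := {t | t.1.1 ++ t.2.1.1 = t.2.1.1 ++ t.1.1} with hScm
  have hT : Nat.card V = n^a * n^b * n^c := by
    rw [hV, Nat.card_prod, Nat.card_prod, natCard_Wd, natCard_Wd, natCard_Wd, mul_assoc]
  have hchar : Spre = (SA ∪ SB ∪ SC)ᶜ := by
    ext t
    simp only [hSpre, hSA, hSB, hSC, Set.mem_setOf_eq, Set.mem_compl_iff, Set.mem_union]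
    rw [prefixCode_triple_iff t.1.2 t.2.1.2 t.2.2.2 hab hbc]
    tauto
  have nA : SA.ncard = n^a * (n^(b-a) * n^c) := by
    rw [← Nat.card_coe_set_eq]
    exact (Nat.card_congr (eA n a b c hab)).trans (by
      rw [Nat.card_prod, Nat.card_prod, natCard_Wd, natCard_Wd, natCard_Wd])
  have nB : SB.ncard = n^a * (n^b * n^(c-a)) := by
    rw [← Nat.card_coe_set_eq]
    exact (Nat.card_congr (eB n a b c hac)).trans (by
      rw [Nat.card_prod, Nat.card_prod, natCard_Wd, natCard_Wd, natCard_Wd])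
  have nC : SC.ncard = n^a * (n^b * n^(c-b)) := by
    rw [← Nat.card_coe_set_eq]
    exact (Nat.card_congr (eC n a b c hbc)).trans (by
      rw [Nat.card_prod, Nat.card_prod, natCard_Wd, natCard_Wd, natCard_Wd])
  have nAB : (SA ∩ SB).ncard = n^a * (n^(b-a) * n^(c-a)) := by
    rw [← Nat.card_coe_set_eq]
    exact (Nat.card_congr (eAB n a b c hab hac)).trans (by
      rw [Nat.card_prod, Nat.card_prod, natCard_Wd, natCard_Wd, natCard_Wd])
  have nAC : (SA ∩ SC).ncard = n^a * (n^(b-a) * n^(c-b)) := by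
    rw [← Nat.card_coe_set_eq]
    exact (Nat.card_congr (eAC n a b c hab hbc)).trans (by
      rw [Nat.card_prod, Nat.card_prod, natCard_Wd, natCard_Wd, natCard_Wd])
  have hBCeq : SB ∩ SC = SA ∩ SC := by
    ext t
    simp only [hSA, hSB, hSC, Set.mem_inter_iff, Set.mem_setOf_eq]
    constructor
    · rintro ⟨h1, h2⟩
      refine ⟨List.prefix_of_prefix_length_le h1 h2 ?_, h2⟩
      rw [t.1.2, t.2.1.2]; exact hab
    · rintro ⟨h1, h2⟩
      exact ⟨h1.trans h2, h2⟩
  have h1 : Spre.ncard + (SA ∪ SB ∪ SC).ncard = n^a * n^b * n^c := by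
    rw [hchar, ← hT, ← Set.ncard_add_ncard_compl (SA ∪ SB ∪ SC)]
    omega
  have h2 : (SA ∪ SB ∪ SC).ncard + ((SA ∪ SB) ∩ SC).ncard = (SA ∪ SB).ncard + SC.ncard :=
    Set.ncard_union_add_ncard_inter _ _
  have h3 : (SA ∪ SB).ncard + (SA ∩ SB).ncard = SA.ncard + SB.ncard :=
    Set.ncard_union_add_ncard_inter _ _
  have h4 : (SA ∪ SB) ∩ SC = SA ∩ SC := by
    rw [Set.union_inter_distrib_right, hBCeq, Set.union_self]
  have hPreCount : Spre.ncard + SA.ncard + SB.ncard + SC.ncard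
      = n^a * n^b * n^c + (SA ∩ SB).ncard + (SA ∩ SC).ncard := by
    rw [h4] at h2
    omega
  have hUDsub : Sud ⊆ Scmᶜ := fun t ht => not_comm_of_isUD ht
  have hsp_mem : (spw n a b c hn hb) ∈ Scmᶜ := spw_not_comm n a b c hn ha hb
  have hsp_notmem : (spw n a b c hn hb) ∉ Sud := spw_not_ud n a b c hn hb
  have hUDlt : Sud.ncard < Scmᶜ.ncard := by
    exact Set.ncard_lt_ncard
      ((Set.ssubset_iff_of_subset hUDsub).mpr ⟨_, hsp_mem, hsp_notmem⟩) (Set.toFinite _)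
  have hcmLower : n^(Nat.gcd a b) * n^c ≤ Scm.ncard := by
    rw [← Nat.card_coe_set_eq]
    have h5 := Nat.card_le_card_of_injective _ (commInj_injective n a b c ha)
    rw [Nat.card_prod, natCard_Wd, natCard_Wd] at h5
    exact h5
  have hcmCompl : Scm.ncard + Scmᶜ.ncard = n^a * n^b * n^c := by
    rw [← hT]; exact Set.ncard_add_ncard_compl _
  have hgcd : n^(c+1) ≤ n^(Nat.gcd a b) * n^c := by
    have hg1 : 1 ≤ Nat.gcd a b := Nat.gcd_pos_of_pos_left b ha
    rw [pow_succ]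
    have h1 : n ≤ n^(Nat.gcd a b) := by
      calc n = n^1 := (pow_one n).symm
        _ ≤ n^(Nat.gcd a b) := Nat.pow_le_pow_right (by omega) hg1
    calc n^c * n ≤ n^c * n^(Nat.gcd a b) := Nat.mul_le_mul_left _ h1
      _ = n^(Nat.gcd a b) * n^c := Nat.mul_comm _ _
  have hUDCount : Sud.ncard + 1 + n^(c+1) ≤ n^a * n^b * n^c := by omega
  have hPreUD : Spre ⊆ Sud := fun t ht => isUD_of_isPrefixCode (by norm_num) ht
  have hPU : Spre.ncard ≤ Sud.ncard := Set.ncard_le_ncard hPreUD (Set.toFinite _)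
  -- pass to the reals
  have key := key_pow n a b c hn ha hab hbc hkraft
  rw [← hrr] at key
  have hPreR : (Spre.ncard : ℝ) + (n:ℝ)^a*(n^(b-a)*n^c) + n^a*(n^b*n^(c-a)) + n^a*(n^b*n^(c-b))
      = (n:ℝ)^a*n^b*n^c + n^a*(n^(b-a)*n^(c-a)) + n^a*(n^(b-a)*n^(c-b)) := by
    have hh := hPreCount
    rw [nA, nB, nC, nAB, nAC] at hh
    exact_mod_cast congrArg (Nat.cast : ℕ → ℝ) hh
  have hUR : (Sud.ncard : ℝ) + 1 + (n:ℝ)^(c+1) ≤ (n:ℝ)^a*n^b*n^c := by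
    exact_mod_cast hUDCount
  have q1 : (n:ℝ)^a * n^(b-a) = n^b := by rw [← pow_add]; congr 1; omega
  have hP : (0:ℝ) < (n:ℝ)^a := by positivity
  have hQ : (0:ℝ) < (n:ℝ)^b := by positivity
  have hR : (0:ℝ) < (n:ℝ)^c := by positivity
  have k1 : (n:ℝ)^(c-a) + n^(c-b) + 1 ≤ n^c := by
    have h := mul_le_mul_of_nonneg_left hkraft hR.le
    have e1 : (n:ℝ)^c * (1/n^a) = n^(c-a) := by
      rw [mul_one_div, eq_comm, eq_div_iff hP.ne', ← pow_add]
      congr 1; omega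
    have e2 : (n:ℝ)^c * (1/n^b) = n^(c-b) := by
      rw [mul_one_div, eq_comm, eq_div_iff hQ.ne', ← pow_add]
      congr 1; omega
    have e3 : (n:ℝ)^c * (1/n^c) = 1 := by
      rw [mul_one_div, div_self hR.ne']
    nlinarith [h, e1, e2, e3]
  have hfact : (Spre.ncard : ℝ)
      = ((n:ℝ)^a * n^b - n^b) * ((n:ℝ)^c - n^(c-a) - n^(c-b)) := by
    have expand : ((n:ℝ)^a*n^b*n^c + n^a*(n^(b-a)*n^(c-a)) + n^a*(n^(b-a)*n^(c-b)))
        - ((n:ℝ)^a*(n^(b-a)*n^c) + n^a*(n^b*n^(c-a)) + n^a*(n^b*n^(c-b)))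
        = ((n:ℝ)^a * n^b - n^b) * ((n:ℝ)^c - n^(c-a) - n^(c-b)) := by
      linear_combination ((n:ℝ)^(c-a) + (n:ℝ)^(c-b) - (n:ℝ)^c) * q1
    linarith [hPreR, expand]
  have hna : (n:ℝ) ≤ (n:ℝ)^a := by
    calc (n:ℝ) = n^1 := (pow_one _).symm
      _ ≤ n^a := pow_le_pow_right₀ hn1R ha
  have hf1 : (0:ℝ) < (n:ℝ)^a * n^b - n^b := by
    have h' : (0:ℝ) < ((n:ℝ)^a - 1) * (n:ℝ)^b := mul_pos (by linarith) hQ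
    have hexp : ((n:ℝ)^a - 1) * (n:ℝ)^b = (n:ℝ)^a*n^b - n^b := by ring
    exact hexp ▸ h'
  have hf2 : (0:ℝ) < (n:ℝ)^c - n^(c-a) - n^(c-b) := by linarith
  have hPpos : (0:ℝ) < (Spre.ncard : ℝ) := by
    rw [hfact]; exact mul_pos hf1 hf2
  have hUpos : (0:ℝ) < (Sud.ncard : ℝ) :=
    lt_of_lt_of_le hPpos (by exact_mod_cast hPU)
  have hrrpos : (0:ℝ) < rr := by
    rw [hrr]
    by_cases h2 : n = 2
    · simp [h2]
    · simp only [if_neg h2]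
      have hn3 : (3:ℝ) ≤ n := by
        have : 3 ≤ n := by omega
        exact_mod_cast this
      exact div_pos (by linarith) hnR
  have gP : Nat.card {T : List (Fin n) × List (Fin n) × List (Fin n) //
      T.1.length = a ∧ T.2.1.length = b ∧ T.2.2.length = c ∧
      IsPrefixCode ![T.1, T.2.1, T.2.2]} = Spre.ncard := by
    exact (Nat.card_congr (tripleEquiv n a b c (fun w v u => IsPrefixCode ![w, v, u]))).trans
      (Nat.card_coe_set_eq Spre)
  have gU : Nat.card {T : List (Fin n) × List (Fin n) × List (Fin n) //
      T.1.length = a ∧ T.2.1.length = b ∧ T.2.2.length = c ∧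
      IsUDCode ![T.1, T.2.1, T.2.2]} = Sud.ncard := by
    exact (Nat.card_congr (tripleEquiv n a b c (fun w v u => IsUDCode ![w, v, u]))).trans
      (Nat.card_coe_set_eq Sud)
  rw [gP, gU, gt_iff_lt, lt_div_iff₀ hUpos]
  have m1 : rr * (Sud.ncard:ℝ) ≤ rr * ((n:ℝ)^a*n^b*n^c - n^(c+1) - 1) :=
    mul_le_mul_of_nonneg_left (by linarith) hrrpos.le
  linarith [m1, key, hrrpos, hPreR]

end PrefRatioAux

theorem prefix_ratio_gt_alpha (n a b c : ℕ) (hn : 2 ≤ n) (hab : a ≤ b) (hbc : b ≤ c)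
    (hkraft : (1 : ℝ) / n ^ a + 1 / n ^ b + 1 / n ^ c ≤ 1) :
    (Nat.card {T : List (Fin n) × List (Fin n) × List (Fin n) //
        T.1.length = a ∧ T.2.1.length = b ∧ T.2.2.length = c ∧
        IsPrefixCode ![T.1, T.2.1, T.2.2]} : ℝ) /
      (Nat.card {T : List (Fin n) × List (Fin n) × List (Fin n) //
        T.1.length = a ∧ T.2.1.length = b ∧ T.2.2.length = c ∧
        IsUDCode ![T.1, T.2.1, T.2.2]} : ℝ) >
      (if n = 2 then 1 / 6 else ((n : ℝ) - 2) / n) :=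
  PrefRatioAux.main n a b c hn hab hbc hkraft
end

section
/- For every n ≥ 2 and natural numbers a, b ≥ 1, the number of uniquely decodable codes (pairs of words) with length distribution (a,b) over an n-letter alphabet equals n^{a+b} − n^{gcd(a,b)}. -/
namespace CountUD

variable {X : Type*}

/-- `pw z k` is the `k`-th power of the word `z`. -/
def pw (z : List X) : ℕ → List X
  | 0 => []
  | k + 1 => z ++ pw z k

@[simp] lemma pw_zero (z : List X) : pw z 0 = [] := rfl

lemma pw_succ (z : List X) (k : ℕ) : pw z (k + 1) = z ++ pw z k := rfl

@[simp] lemma length_pw (z : List X) (k : ℕ) : (pw z k).length = k * z.length := by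
  induction k with
  | zero => simp
  | succ k ih => simp [pw_succ, ih, Nat.succ_mul, Nat.add_comm]

lemma pw_add (z : List X) (k l : ℕ) : pw z (k + l) = pw z k ++ pw z l := by
  induction k with
  | zero => simp
  | succ k ih =>
    have : k + 1 + l = (k + l) + 1 := by ring
    rw [this, pw_succ, pw_succ, ih, List.append_assoc]

lemma pw_comm (z : List X) (k l : ℕ) : pw z k ++ pw z l = pw z l ++ pw z k := by
  rw [← pw_add, ← pw_add, Nat.add_comm]

/-- Membership in the submonoid generated by two words. -/
def InStar (x y A : List X) : Prop :=
  ∃ ls : List (List X), (∀ c ∈ ls, c = x ∨ c = y) ∧ ls.flatten = A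

lemma InStar.swap {x y A : List X} (h : InStar x y A) : InStar y x A := by
  obtain ⟨ls, h1, h2⟩ := h
  exact ⟨ls, fun c hc => (h1 c hc).symm, h2⟩

lemma star_mono {x p A : List X} (hA : InStar x (x ++ p) A) : InStar x p A := by
  obtain ⟨ls, hls, rfl⟩ := hA
  induction ls with
  | nil => exact ⟨[], by simp⟩
  | cons c t ih =>
    obtain ⟨ls', h1, h2⟩ := ih (fun c hc => hls c (List.mem_cons_of_mem _ hc))
    rcases hls c (List.mem_cons_self) with hc | hc
    · refine ⟨c :: ls', ?_, ?_⟩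
      · intro d hd
        rcases List.mem_cons.mp hd with rfl | hd
        · exact Or.inl hc
        · exact h1 d hd
      · simp [h2]
    · refine ⟨x :: p :: ls', ?_, ?_⟩
      · intro d hd
        rcases List.mem_cons.mp hd with rfl | hd
        · exact Or.inl rfl
        rcases List.mem_cons.mp hd with rfl | hd
        · exact Or.inr rfl
        · exact h1 d hd
      · simp [h2, hc, List.append_assoc]

/-- Key lemma: if `x ++ A = y ++ B` with `A, B` in the submonoid generated by
`x` and `y`, then `x` and `y` commute. -/
lemma comm_of_star_eq : ∀ n : ℕ, ∀ x y A B : List X, x.length + y.length ≤ n →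
    x ++ A = y ++ B → InStar x y A → InStar x y B → x ++ y = y ++ x := by
  intro n
  induction n with
  | zero =>
    intro x y A B hlen _ _ _
    have hx : x = [] := List.length_eq_zero_iff.mp (by omega)
    subst hx; simp
  | succ n ih =>
    have core : ∀ x y A B : List X, x ≠ [] → x.length + y.length ≤ n + 1 →
        x.length ≤ y.length → x ++ A = y ++ B → InStar x y A → InStar x y B →
        x ++ y = y ++ x := by
      intro x y A B hx hlen hxy heq hA hB
      have hxpos : 0 < x.length := List.length_pos_iff.mpr hx
      have hpre : x <+: y := by
        refine List.prefix_of_prefix_length_le ?_ (List.prefix_append y B) hxy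
        rw [← heq]; exact List.prefix_append x A
      obtain ⟨p, rfl⟩ := hpre
      have hAeq : A = p ++ B := by
        rw [List.append_assoc] at heq
        exact List.append_cancel_left heq
      obtain ⟨ls, hls, hjoin⟩ := hA
      have hmeas : x.length + p.length ≤ n := by
        simp only [List.length_append] at hlen; omega
      rcases ls with _ | ⟨c, t⟩
      · -- A = [], so p ++ B = [] hence p = []
        simp only [List.flatten] at hjoin
        have : p = [] := by
          have h0 : p ++ B = [] := by
            rw [← hAeq]; simpa using hjoin.symm
          exact (List.append_eq_nil_iff.mp h0).1
        subst this; simp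
      · have htstar : InStar x (x ++ p) t.flatten :=
          ⟨t, fun d hd => hls d (List.mem_cons_of_mem _ hd), rfl⟩
        have hBstar : InStar x p B := star_mono hB
        rcases hls c (List.mem_cons_self) with rfl | rfl
        · -- first code word is x : x ++ t.flatten = p ++ B
          have heq2 : c ++ t.flatten = p ++ B := by
            have : c ++ t.flatten = A := by simpa using hjoin
            rw [this, hAeq]
          have hcomm := ih c p t.flatten B hmeas heq2 (star_mono htstar) hBstar
          rw [List.append_assoc, ← hcomm]
        · -- first code word is x ++ p : x ++ (p ++ t.flatten) = p ++ B
          have heq2 : x ++ (p ++ t.flatten) = p ++ B := by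
            have : (x ++ p) ++ t.flatten = A := by simpa using hjoin
            rw [← List.append_assoc, this, hAeq]
          have hAstar : InStar x p (p ++ t.flatten) := by
            obtain ⟨ls', h1, h2⟩ := star_mono htstar
            refine ⟨p :: ls', ?_, by simp [h2]⟩
            intro d hd
            rcases List.mem_cons.mp hd with rfl | hd
            · exact Or.inr rfl
            · exact h1 d hd
          have hcomm := ih x p (p ++ t.flatten) B hmeas heq2 hAstar hBstar
          rw [List.append_assoc, ← hcomm]
    intro x y A B hlen heq hA hB
    rcases eq_or_ne x [] with rfl | hx
    · simp
    rcases eq_or_ne y [] with rfl | hy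
    · simp
    rcases le_total x.length y.length with h | h
    · exact core x y A B hx hlen h heq hA hB
    · exact (core y x B A hy (by omega) h heq.symm hB.swap hA.swap).symm

/-- If `w` and `v` commute then both are powers of a common word of length
`gcd |w| |v|`. -/
lemma exists_pow_of_comm : ∀ n : ℕ, ∀ w v : List X, w.length + v.length ≤ n →
    w ++ v = v ++ w →
    ∃ z k l, z.length = Nat.gcd w.length v.length ∧ w = pw z k ∧ v = pw z l := by
  intro n
  induction n with
  | zero =>
    intro w v hlen _
    have hw : w = [] := List.length_eq_zero_iff.mp (by omega)
    have hv : v = [] := List.length_eq_zero_iff.mp (by omega)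
    subst hw; subst hv
    exact ⟨[], 0, 0, by simp, rfl, rfl⟩
  | succ n ih =>
    have core : ∀ w v : List X, w ≠ [] → w.length + v.length ≤ n + 1 →
        w.length ≤ v.length → w ++ v = v ++ w →
        ∃ z k l, z.length = Nat.gcd w.length v.length ∧ w = pw z k ∧ v = pw z l := by
      intro w v hw hlen hwv heq
      have hwpos : 0 < w.length := List.length_pos_iff.mpr hw
      have hpre : w <+: v := by
        refine List.prefix_of_prefix_length_le ?_ (List.prefix_append v w) hwv
        rw [← heq]; exact List.prefix_append w v
      obtain ⟨u, rfl⟩ := hpre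
      have heq2 : w ++ u = u ++ w := by
        have : w ++ (w ++ u) = w ++ (u ++ w) := by
          rw [heq, List.append_assoc]
        exact List.append_cancel_left this
      have hmeas : w.length + u.length ≤ n := by
        simp only [List.length_append] at hlen; omega
      obtain ⟨z, k, l, hz, hwz, huz⟩ := ih w u hmeas heq2
      refine ⟨z, k, k + l, ?_, hwz, ?_⟩
      · rw [hz, List.length_append, Nat.add_comm w.length u.length,
          Nat.gcd_add_self_right]
      · rw [pw_add, ← hwz, ← huz]
    intro w v hlen heq
    rcases eq_or_ne w [] with rfl | hw
    · exact ⟨v, 0, 1, by simp [pw], rfl, by simp [pw]⟩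
    rcases eq_or_ne v [] with rfl | hv
    · exact ⟨w, 1, 0, by simp [pw], by simp [pw], rfl⟩
    rcases le_total w.length v.length with h | h
    · exact core w v hw hlen h heq
    · obtain ⟨z, k, l, hz, h1, h2⟩ := core v w hv (by omega) h heq.symm
      exact ⟨z, l, k, by rw [hz, Nat.gcd_comm], h2, h1⟩
lemma star_join {w v : List X} (l : List (Fin 2)) :
    InStar w v ((l.map ![w, v]).flatten) := by
  refine ⟨l.map ![w, v], ?_, rfl⟩
  intro c hc
  simp only [List.mem_map] at hc
  obtain ⟨k, _, rfl⟩ := hc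
  fin_cases k
  · exact Or.inl rfl
  · exact Or.inr rfl

lemma comm_of_not_ud {w v : List X} (hw : w ≠ []) (hv : v ≠ []) :
    ∀ l₁ l₂ : List (Fin 2), (l₁.map ![w, v]).flatten = (l₂.map ![w, v]).flatten →
      l₁ ≠ l₂ → w ++ v = v ++ w := by
  intro l₁
  induction l₁ with
  | nil =>
    intro l₂ h hne
    rcases l₂ with _ | ⟨j, t⟩
    · exact absurd rfl hne
    · exfalso
      simp only [List.map_cons, List.flatten, List.map_nil] at h
      have : (![w, v] j) = [] := (List.append_eq_nil_iff.mp h.symm).1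
      fin_cases j
      · exact hw (by simpa using this)
      · exact hv (by simpa using this)
  | cons i t₁ ih =>
    intro l₂ h hne
    rcases l₂ with _ | ⟨j, t₂⟩
    · exfalso
      simp only [List.map_cons, List.flatten, List.map_nil] at h
      have : (![w, v] i) = [] := (List.append_eq_nil_iff.mp h).1
      fin_cases i <;> simp_all
    · simp only [List.map_cons, List.flatten] at h
      by_cases hij : i = j
      · subst hij
        have h' := List.append_cancel_left h
        exact ih t₂ h' (fun he => hne (by rw [he]))
      · have s1 := star_join (w := w) (v := v) t₁
        have s2 := star_join (w := w) (v := v) t₂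
        fin_cases i <;> fin_cases j <;> simp_all
        · exact comm_of_star_eq (w.length + v.length) w v _ _ le_rfl h s1 s2
        · exact (comm_of_star_eq (v.length + w.length) v w _ _ le_rfl h
            s1.swap s2.swap).symm

lemma ud_iff {w v : List X} (hw : w ≠ []) (hv : v ≠ []) :
    IsUDCode ![w, v] ↔ w ++ v ≠ v ++ w := by
  constructor
  · intro hud heq
    have h01 : (([0, 1] : List (Fin 2)).map ![w, v]).flatten
        = (([1, 0] : List (Fin 2)).map ![w, v]).flatten := by
      simp [heq]
    have := hud [0, 1] [1, 0] h01
    simp at this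
  · intro hne l₁ l₂ h
    by_contra hll
    exact hne (comm_of_not_ud hw hv l₁ l₂ h hll)

end CountUD

open CountUD in
theorem count_ud_pairs {X : Type*} [Fintype X] (n a b : ℕ) (hn : 2 ≤ n)
    (hX : Fintype.card X = n) (ha : 1 ≤ a) (hb : 1 ≤ b) :
    Nat.card {p : List X × List X // p.1.length = a ∧ p.2.length = b ∧
        IsUDCode ![p.1, p.2]} = n ^ (a + b) - n ^ Nat.gcd a b := by
  classical
  set g := Nat.gcd a b with hgdef
  have hga : g ∣ a := Nat.gcd_dvd_left a b
  have hgb : g ∣ b := Nat.gcd_dvd_right a b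
  have hg : 0 < g := Nat.gcd_pos_of_pos_left b (by omega)
  have hgla : g ≤ a := Nat.le_of_dvd (by omega) hga
  have hglb : g ≤ b := Nat.le_of_dvd (by omega) hgb
  set V := List.Vector X a × List.Vector X b with hVdef
  set Comm : V → Prop := fun q => q.1.1 ++ q.2.1 = q.2.1 ++ q.1.1 with hCommdef
  -- the set of UD pairs is equivalent to the non-commuting pairs
  have hne : ∀ (l : List X) (c : ℕ), 1 ≤ c → l.length = c → l ≠ [] := by
    intro l c hc hl
    exact List.length_pos_iff.mp (by omega)
  have e1 : {p : List X × List X // p.1.length = a ∧ p.2.length = b ∧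
      IsUDCode ![p.1, p.2]} ≃ {q : V // ¬ Comm q} := by
    refine ⟨fun p => ⟨(⟨p.1.1, p.2.1⟩, ⟨p.1.2, p.2.2.1⟩), ?_⟩,
      fun q => ⟨(q.1.1.1, q.1.2.1), q.1.1.2, q.1.2.2, ?_⟩,
      fun p => rfl, fun q => rfl⟩
    · exact (ud_iff (hne _ _ ha p.2.1) (hne _ _ hb p.2.2.1)).mp p.2.2.2
    · exact (ud_iff (hne _ _ ha q.1.1.2) (hne _ _ hb q.1.2.2)).mpr q.2
  -- the commuting pairs are equivalent to words of length gcd a b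
  have e2 : {q : V // Comm q} ≃ List.Vector X g := by
    refine ⟨fun q => ⟨q.1.1.1.take g, ?_⟩,
      fun z => ⟨(⟨pw z.1 (a / g), ?_⟩, ⟨pw z.1 (b / g), ?_⟩), pw_comm z.1 _ _⟩, ?_, ?_⟩
    · rw [List.length_take, q.1.1.2]
      exact min_eq_left hgla
    · rw [length_pw, z.2, Nat.div_mul_cancel hga]
    · rw [length_pw, z.2, Nat.div_mul_cancel hgb]
    · rintro ⟨⟨⟨w, hwa⟩, ⟨v, hvb⟩⟩, hcomm⟩
      obtain ⟨z, k, l, hz, hwz, hvz⟩ :=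
        exists_pow_of_comm (w.length + v.length) w v le_rfl hcomm
      rw [hwa, hvb, ← hgdef] at hz
      have hka : k * g = a := by rw [← hwa, hwz, length_pw, hz]
      have hlb : l * g = b := by rw [← hvb, hvz, length_pw, hz]
      have hk : 0 < k := by
        rcases Nat.eq_zero_or_pos k with rfl | h
        · omega
        · exact h
      have htake : w.take g = z := by
        have : k = (k - 1) + 1 := by omega
        rw [hwz, this, pw_succ, ← hz, List.take_left]
      have hak : a / g = k := by rw [← hka, Nat.mul_div_cancel _ hg]
      have hbl : b / g = l := by rw [← hlb, Nat.mul_div_cancel _ hg]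
      apply Subtype.ext
      apply Prod.ext <;> apply Subtype.ext <;> simp only
      · rw [htake, hak, ← hwz]
      · rw [htake, hbl, ← hvz]
    · rintro ⟨z, hz⟩
      apply Subtype.ext
      have hdiv : 0 < a / g := Nat.div_pos hgla hg
      obtain ⟨m, hm⟩ : ∃ m, a / g = m + 1 := ⟨a / g - 1, by omega⟩
      simp only [hm, pw_succ]
      rw [← hz, List.take_left]
  have hV : Fintype.card V = n ^ (a + b) := by
    show Fintype.card (List.Vector X a × List.Vector X b) = _
    rw [Fintype.card_prod, card_vector, card_vector, hX, pow_add]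
  have hC : Fintype.card {q : V // Comm q} = n ^ g := by
    rw [← Nat.card_eq_fintype_card, Nat.card_congr e2, Nat.card_eq_fintype_card,
      card_vector, hX]
  calc Nat.card {p : List X × List X // p.1.length = a ∧ p.2.length = b ∧
          IsUDCode ![p.1, p.2]}
      = Nat.card {q : V // ¬ Comm q} := Nat.card_congr e1
    _ = Fintype.card {q : V // ¬ Comm q} := Nat.card_eq_fintype_card
    _ = Fintype.card V - Fintype.card {q : V // Comm q} :=
        Fintype.card_subtype_compl _
    _ = n ^ (a + b) - n ^ g := by rw [hV, hC]
end

section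
/- For every n ≥ 2 and natural numbers a ≥ 1, b ≥ a+1 with (a,b) ≠ (1,b), i.e., a ≥ 2, the quantity Q(a,b) = (n^{a+b} − 2n^b − n^a + n^{b−a} + 1)/(n^{a+b} − n) satisfies Q(a,b) ≥ Q(a,a+1) = 1 − (2n+1)/(n^{a+1} + n). -/
theorem Q_monotone (n a b : ℕ) (hn : 2 ≤ n) (ha : 2 ≤ a) (hb : a + 1 ≤ b) :
    ((n : ℝ) ^ (a + b) - 2 * n ^ b - n ^ a + n ^ (b - a) + 1) / (n ^ (a + b) - n) ≥
      ((n : ℝ) ^ (a + (a + 1)) - 2 * n ^ (a + 1) - n ^ a + n ^ (a + 1 - a) + 1) /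
        (n ^ (a + (a + 1)) - n) ∧
    ((n : ℝ) ^ (a + (a + 1)) - 2 * n ^ (a + 1) - n ^ a + n ^ (a + 1 - a) + 1) /
        (n ^ (a + (a + 1)) - n) =
      1 - (2 * n + 1) / ((n : ℝ) ^ (a + 1) + n) := by
  obtain ⟨k, rfl⟩ := Nat.exists_eq_add_of_le hb
  have hx : (2:ℝ) ≤ (n:ℝ) := by exact_mod_cast hn
  set x : ℝ := (n : ℝ) with hxdef
  have hx1 : (1:ℝ) ≤ x := by linarith
  have hx0 : (0:ℝ) < x := by linarith
  have e1 : a + 1 - a = 1 := by omega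
  have e2 : a + 1 + k - a = k + 1 := by omega
  have e3 : a + (a + 1) = a + a + 1 := by ring
  have e4 : a + (a + 1 + k) = a + a + k + 1 := by ring
  have e5 : a + 1 + k = a + k + 1 := by ring
  rw [e1, e2, e3, e4, e5]
  have hMx : x ≤ x ^ a := by
    calc x = x ^ 1 := (pow_one x).symm
    _ ≤ x ^ a := pow_le_pow_right₀ hx1 (by omega)
  have hPx : x ≤ x ^ (k + 1) := by
    calc x = x ^ 1 := (pow_one x).symm
    _ ≤ x ^ (k + 1) := pow_le_pow_right₀ hx1 (by omega)
  have hM1 : (1:ℝ) ≤ x ^ a := one_le_pow₀ hx1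
  have hD2 : (0:ℝ) < x ^ (a + a + 1) - x := by
    have : x * x ≤ x ^ (a + a + 1) := by
      calc x * x = x ^ 2 := by ring
      _ ≤ x ^ (a + a + 1) := pow_le_pow_right₀ hx1 (by omega)
    nlinarith
  have hD1 : (0:ℝ) < x ^ (a + a + k + 1) - x := by
    have : x * x ≤ x ^ (a + a + k + 1) := by
      calc x * x = x ^ 2 := by ring
      _ ≤ x ^ (a + a + k + 1) := pow_le_pow_right₀ hx1 (by omega)
    nlinarith
  have hE : (0:ℝ) < x ^ (a + 1) + x := by positivity
  have heq : (x ^ (a + a + 1) - 2 * x ^ (a + 1) - x ^ a + x ^ 1 + 1) /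
      (x ^ (a + a + 1) - x) = 1 - (2 * x + 1) / (x ^ (a + 1) + x) := by
    rw [div_eq_iff (ne_of_gt hD2)]
    field_simp
    simp only [pow_add, pow_succ, pow_zero]
    ring
  refine ⟨?_, heq⟩
  rw [heq, ge_iff_le]
  have heq2 : 1 - (2 * x + 1) / (x ^ (a + 1) + x) =
      (x ^ (a + 1) + x - (2 * x + 1)) / (x ^ (a + 1) + x) := by
    field_simp
  rw [heq2, div_le_div_iff₀ hE hD1]
  have key : 0 ≤ (x ^ (k + 1) - x) * (x ^ a * x ^ a - x ^ a * x + x) := by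
    apply mul_nonneg
    · linarith
    · nlinarith
  have expand : (x ^ (a + a + k + 1) - 2 * x ^ (a + k + 1) - x ^ a + x ^ (k + 1) + 1) *
        (x ^ (a + 1) + x) -
      (x ^ (a + 1) + x - (2 * x + 1)) * (x ^ (a + a + k + 1) - x) =
      (x ^ (k + 1) - x) * (x ^ a * x ^ a - x ^ a * x + x) := by
    simp only [pow_add, pow_succ, pow_zero]
    ring
  linarith [key, expand]
end
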